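/- For every p : ℕ and every n : ℕ, the p-Motzkin number satisfies the closed form M p n = ∑_{k=0}^{⌊n/2⌋} Nat.choose n (2k) · C p k, where C p k = p^(k+1) · Nat.catalan k is the k-th p-Catalan number. -/

import Mathlib

open Finset

lemma hstick (m a : ℕ) : ∑ k ∈ range (m + 1), Nat.choose k a = Nat.choose (m + 1) (a + 1) := by
  induction m with
  | zero => cases a <;> simp [Nat.choose]
  | succ m ih =>
    rw [sum_range_succ, ih]
    rw [show m + 1 + 1 = (m + 1) + 1 from rfl, Nat.choose_succ_succ' (m + 1) a]
    omega

lemma vander (n a b : ℕ) :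
    ∑ k ∈ range (n + 1), Nat.choose k a * Nat.choose (n - k) b
      = Nat.choose (n + 1) (a + b + 1) := by
  induction n generalizing b with
  | zero => cases a <;> cases b <;> simp [Nat.choose]
  | succ n ih =>
    cases b with
    | zero => simpa using hstick (n + 1) a
    | succ b =>
      have step : ∀ k ∈ range (n + 1), Nat.choose k a * Nat.choose (n + 1 - k) (b + 1)
          = Nat.choose k a * Nat.choose (n - k) b + Nat.choose k a * Nat.choose (n - k) (b + 1) := by
        intro k hk
        have h : n + 1 - k = (n - k) + 1 := by have := mem_range.mp hk; omega
        rw [h, Nat.choose_succ_succ, mul_add]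
      rw [sum_range_succ, sum_congr rfl step, sum_add_distrib, ih b, ih (b + 1),
        Nat.sub_self, Nat.choose_eq_zero_of_lt (Nat.succ_pos b), mul_zero, add_zero,
        show a + (b + 1) + 1 = (a + b + 1) + 1 from by ring,
        Nat.choose_succ_succ' (n + 1) (a + b + 1)]

lemma extend (p m R : ℕ) (h : m / 2 + 1 ≤ R) :
    ∑ k ∈ range (m / 2 + 1), Nat.choose m (2 * k) * (p ^ (k + 1) * catalan k)
      = ∑ k ∈ range R, Nat.choose m (2 * k) * (p ^ (k + 1) * catalan k) := by
  apply sum_subset (by simpa using h)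
  intro k _ hk
  rw [Nat.choose_eq_zero_of_lt (by simp at hk; omega), zero_mul]

lemma conv (p n : ℕ) :
    ∑ k ∈ range (n + 1),
      (∑ i ∈ range (k / 2 + 1), Nat.choose k (2 * i) * (p ^ (i + 1) * catalan i)) *
      (∑ l ∈ range ((n - k) / 2 + 1), Nat.choose (n - k) (2 * l) * (p ^ (l + 1) * catalan l))
    = ∑ j ∈ range (n + 2), Nat.choose (n + 1) (2 * j + 1) * (p ^ (j + 2) * catalan (j + 1)) := by
  have key : ∀ j, ∑ x ∈ (range (n + 1) ×ˢ range (n + 1)).filter (fun x => x.1 + x.2 = j),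
      Nat.choose (n + 1) (2 * x.1 + 2 * x.2 + 1) *
        (p ^ (x.1 + 1) * catalan x.1 * (p ^ (x.2 + 1) * catalan x.2))
      = Nat.choose (n + 1) (2 * j + 1) * (p ^ (j + 2) * catalan (j + 1)) := by
    intro j
    rcases le_or_gt j n with hj | hj
    · have hfil : (range (n + 1) ×ˢ range (n + 1)).filter (fun x => x.1 + x.2 = j)
          = Finset.HasAntidiagonal.antidiagonal j := by
        ext x
        simp only [mem_filter, mem_product, mem_range, Finset.HasAntidiagonal.mem_antidiagonal]
        omega
      rw [hfil]
      have : ∀ x ∈ Finset.HasAntidiagonal.antidiagonal j,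
          Nat.choose (n + 1) (2 * x.1 + 2 * x.2 + 1) *
            (p ^ (x.1 + 1) * catalan x.1 * (p ^ (x.2 + 1) * catalan x.2))
          = Nat.choose (n + 1) (2 * j + 1) * (p ^ (j + 2) * (catalan x.1 * catalan x.2)) := by
        intro x hx
        have hx' : x.1 + x.2 = j := Finset.HasAntidiagonal.mem_antidiagonal.mp hx
        rw [← hx', show 2 * (x.1 + x.2) + 1 = 2 * x.1 + 2 * x.2 + 1 from by ring,
          show x.1 + x.2 + 2 = (x.1 + 1) + (x.2 + 1) from by ring, pow_add]
        ring
      rw [sum_congr rfl this, ← mul_sum]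
      congr 1
      rw [← mul_sum, ← catalan_succ']
    · rw [Nat.choose_eq_zero_of_lt (show n + 1 < 2 * j + 1 by omega), zero_mul]
      apply sum_eq_zero
      intro x hx
      obtain ⟨hmem, hsum⟩ := mem_filter.mp hx
      rw [Nat.choose_eq_zero_of_lt (by omega), zero_mul]
  calc
    ∑ k ∈ range (n + 1),
      (∑ i ∈ range (k / 2 + 1), Nat.choose k (2 * i) * (p ^ (i + 1) * catalan i)) *
      (∑ l ∈ range ((n - k) / 2 + 1), Nat.choose (n - k) (2 * l) * (p ^ (l + 1) * catalan l))
      = ∑ k ∈ range (n + 1), ∑ i ∈ range (n + 1), ∑ l ∈ range (n + 1),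
          (Nat.choose k (2 * i) * (p ^ (i + 1) * catalan i)) *
          (Nat.choose (n - k) (2 * l) * (p ^ (l + 1) * catalan l)) := by
        refine sum_congr rfl fun k hk => ?_
        rw [extend p k (n + 1) (by have := mem_range.mp hk; omega),
          extend p (n - k) (n + 1) (by omega), sum_mul_sum]
    _ = ∑ i ∈ range (n + 1), ∑ l ∈ range (n + 1), ∑ k ∈ range (n + 1),
          (Nat.choose k (2 * i) * (p ^ (i + 1) * catalan i)) *
          (Nat.choose (n - k) (2 * l) * (p ^ (l + 1) * catalan l)) := by
        rw [Finset.sum_comm]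
        refine sum_congr rfl fun i _ => ?_
        exact Finset.sum_comm
    _ = ∑ i ∈ range (n + 1), ∑ l ∈ range (n + 1),
          Nat.choose (n + 1) (2 * i + 2 * l + 1) *
            (p ^ (i + 1) * catalan i * (p ^ (l + 1) * catalan l)) := by
        refine sum_congr rfl fun i _ => sum_congr rfl fun l _ => ?_
        rw [← vander n (2 * i) (2 * l), sum_mul]
        exact sum_congr rfl fun k _ => by ring
    _ = ∑ x ∈ range (n + 1) ×ˢ range (n + 1),
          Nat.choose (n + 1) (2 * x.1 + 2 * x.2 + 1) *
            (p ^ (x.1 + 1) * catalan x.1 * (p ^ (x.2 + 1) * catalan x.2)) := by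
        rw [Finset.sum_product]
    _ = ∑ j ∈ range (2 * n + 1), ∑ x ∈ (range (n + 1) ×ˢ range (n + 1)).filter
          (fun x => x.1 + x.2 = j),
          Nat.choose (n + 1) (2 * x.1 + 2 * x.2 + 1) *
            (p ^ (x.1 + 1) * catalan x.1 * (p ^ (x.2 + 1) * catalan x.2)) := by
        refine (Finset.sum_fiberwise_of_maps_to (fun x hx => ?_) _).symm
        simp only [mem_product, mem_range] at hx
        simp only [mem_range]
        omega
    _ = ∑ j ∈ range (2 * n + 1),
          Nat.choose (n + 1) (2 * j + 1) * (p ^ (j + 2) * catalan (j + 1)) :=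
        sum_congr rfl fun j _ => key j
    _ = ∑ j ∈ range (n + 2),
          Nat.choose (n + 1) (2 * j + 1) * (p ^ (j + 2) * catalan (j + 1)) := by
        have h1 : ∀ R, n + 1 ≤ R → ∑ j ∈ range R,
            Nat.choose (n + 1) (2 * j + 1) * (p ^ (j + 2) * catalan (j + 1))
            = ∑ j ∈ range (n + 1),
            Nat.choose (n + 1) (2 * j + 1) * (p ^ (j + 2) * catalan (j + 1)) := by
          intro R hR
          refine (sum_subset (by simp [hR]) fun x _ hx => ?_).symm
          rw [Nat.choose_eq_zero_of_lt (by simp at hx; omega), zero_mul]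
        rw [h1 (2 * n + 1) (by omega), h1 (n + 2) (by omega)]

lemma keyrec (p n : ℕ) :
    (∑ k ∈ range ((n + 2) / 2 + 1), Nat.choose (n + 2) (2 * k) * (p ^ (k + 1) * catalan k))
    = (∑ k ∈ range ((n + 1) / 2 + 1), Nat.choose (n + 1) (2 * k) * (p ^ (k + 1) * catalan k))
      + ∑ k ∈ range (n + 1),
          (∑ i ∈ range (k / 2 + 1), Nat.choose k (2 * i) * (p ^ (i + 1) * catalan i)) *
          (∑ l ∈ range ((n - k) / 2 + 1), Nat.choose (n - k) (2 * l) * (p ^ (l + 1) * catalan l)) := by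
  rw [extend p (n + 2) (n + 3) (by omega), extend p (n + 1) (n + 3) (by omega), conv,
    sum_range_succ' (fun k => Nat.choose (n + 2) (2 * k) * (p ^ (k + 1) * catalan k)) (n + 2),
    sum_range_succ' (fun k => Nat.choose (n + 1) (2 * k) * (p ^ (k + 1) * catalan k)) (n + 2)]
  have e1 : ∀ x ∈ range (n + 2),
      Nat.choose (n + 2) (2 * (x + 1)) * (p ^ (x + 1 + 1) * catalan (x + 1))
      = Nat.choose (n + 1) (2 * x + 1) * (p ^ (x + 2) * catalan (x + 1))
        + Nat.choose (n + 1) (2 * (x + 1)) * (p ^ (x + 1 + 1) * catalan (x + 1)) := by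
    intro x _
    rw [show 2 * (x + 1) = (2 * x + 1) + 1 from by ring, Nat.choose_succ_succ (n + 1) (2 * x + 1),
      add_mul]
  rw [sum_congr rfl e1, sum_add_distrib]
  simp only [Nat.mul_zero, Nat.choose_zero_right, catalan_zero, mul_one, one_mul, pow_one]
  omega

/-- The `p`-Motzkin numbers (defined by `M p 0 = M p 1 = p` and
`M p n = M p (n-1) + ∑_{k=0}^{n-2} M p k · M p (n-k-2)` for `n ≥ 2`) satisfy the closed
form `M p n = ∑_{k=0}^{⌊n/2⌋} choose n (2k) · C p k`, where `C p k = p^(k+1) · catalan k`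
is the `k`-th `p`-Catalan number. -/
theorem stmt7 (p : ℕ) (M : ℕ → ℕ) (hM0 : M 0 = p) (hM1 : M 1 = p)
    (hM : ∀ n : ℕ, M (n + 2) = M (n + 1) + ∑ k ∈ Finset.range (n + 1), M k * M (n - k))
    (n : ℕ) :
    M n = ∑ k ∈ Finset.range (n / 2 + 1), Nat.choose n (2 * k) * (p ^ (k + 1) * catalan k) := by
  induction n using Nat.strong_induction_on with
  | _ n ih =>
    match n, ih with
    | 0, _ => simpa using hM0
    | 1, _ => simpa using hM1
    | (m + 2), ih =>
      rw [hM m, ih (m + 1) (by omega)]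
      have hs : ∑ k ∈ range (m + 1), M k * M (m - k)
          = ∑ k ∈ range (m + 1),
            (∑ i ∈ range (k / 2 + 1), Nat.choose k (2 * i) * (p ^ (i + 1) * catalan i)) *
            (∑ l ∈ range ((m - k) / 2 + 1),
              Nat.choose (m - k) (2 * l) * (p ^ (l + 1) * catalan l)) := by
        refine sum_congr rfl fun k hk => ?_
        have hk' := mem_range.mp hk
        rw [ih k (by omega), ih (m - k) (by omega)]
      rw [hs]
      exact (keyrec p m).symm
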